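/- Let C be an F_q-linear subspace of F_q^n. Then for all complex numbers x and y, Σ_{v ∈ C^⊥} x^{n−wt(v)} y^{wt(v)} = (1/|C|) · Σ_{c ∈ C} (x + (q−1)y)^{n−wt(c)} (x − y)^{wt(c)}. -/

import Mathlib

/-!
STATEMENT 2: The MacWilliams identity for Hamming weight generating functions:
for an `F_q`-linear subspace `C ⊆ F_q^n` and all `x y : ℂ`,
`Σ_{v ∈ C^⊥} x^{n−wt(v)} y^{wt(v)} = (1/|C|) Σ_{c ∈ C} (x+(q−1)y)^{n−wt(c)} (x−y)^{wt(c)}`.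
-/

open scoped Classical

noncomputable section

/-- Hamming weight of a vector. -/
def wt {F : Type} [Field F] [Fintype F] {n : ℕ} (v : Fin n → F) : ℕ :=
  (Finset.univ.filter fun i => v i ≠ 0).card

lemma prod_ite_wt {F : Type} [Field F] [Fintype F] {n : ℕ} (v : Fin n → F) (X Y : ℂ) :
    ∏ i, (if v i = 0 then X else Y) = X ^ (n - wt v) * Y ^ wt v := by
  classical
  rw [Finset.prod_ite, Finset.prod_const, Finset.prod_const]
  have h1 : (Finset.univ.filter fun i => ¬ v i = 0).card = wt v := by
    unfold wt; congr 1
  have h2 := Finset.card_filter_add_card_filter_not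
      (s := (Finset.univ : Finset (Fin n))) (p := fun i => v i = 0)
  rw [h1]
  congr 2
  simp only [Finset.card_univ, Fintype.card_fin] at h2
  omega

lemma addchar_map_sum {A M : Type*} [AddCommGroup A] [CommMonoid M] (ψ : AddChar A M)
    {ι : Type*} (s : Finset ι) (g : ι → A) : ψ (∑ i ∈ s, g i) = ∏ i ∈ s, ψ (g i) := by
  classical
  induction s using Finset.induction with
  | empty => simp
  | @insert a s h ih => rw [Finset.sum_insert h, Finset.prod_insert h, AddChar.map_add_eq_mul, ih]

theorem stmt2 (q : ℕ) (F : Type) [Field F] [Fintype F] (hq : Fintype.card F = q)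
    (n : ℕ) (C : Submodule F (Fin n → F)) (x y : ℂ) :
    ∑ v : Fin n → F, (if (∀ c ∈ C, ∑ i, v i * c i = 0) then
        x ^ (n - wt v) * y ^ wt v else 0)
      = (1 / (Nat.card C : ℂ)) *
          ∑ c : Fin n → F, (if c ∈ C then
            (x + ((q : ℂ) - 1) * y) ^ (n - wt c) * (x - y) ^ wt c else 0) := by
  classical
  -- a nontrivial (hence primitive) additive character of F
  obtain ⟨ψ, hψ1⟩ : ∃ ψ : AddChar F ℂ, ψ 1 ≠ 1 :=
    (AddChar.exists_apply_ne_zero (a := (1 : F))).2 one_ne_zero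
  have hψ : ψ ≠ 1 := by
    intro h; exact hψ1 (by rw [h]; rfl)
  have hprim : ψ.IsPrimitive := AddChar.IsPrimitive.of_ne_one hψ
  have hN : (Nat.card C : ℂ) ≠ 0 := by
    have : 0 < Nat.card C := Nat.card_pos
    exact_mod_cast this.ne'
  rw [one_div, inv_mul_eq_div, eq_div_iff hN, Finset.sum_mul]
  -- orthogonality: key lemma 1
  have orth : ∀ v : Fin n → F,
      (if (∀ c ∈ C, ∑ i, v i * c i = 0) then (Nat.card C : ℂ) else 0)
        = ∑ c : Fin n → F, (if c ∈ C then ψ (∑ i, v i * c i) else 0) := by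
    intro v
    split_ifs with h
    · rw [Finset.sum_congr rfl (g := fun c => if c ∈ C then (1:ℂ) else 0)]
      · rw [Finset.sum_boole, Nat.card_eq_fintype_card]
        norm_cast
        rw [Fintype.card_subtype]
      · intro c _
        split_ifs with hc
        · rw [h c hc, AddChar.map_zero_eq_one]
        · rfl
    · push_neg at h
      obtain ⟨c₁, hc₁C, hc₁⟩ := h
      obtain ⟨s, hs⟩ := AddChar.ne_one_iff.1 (hprim hc₁)
      rw [AddChar.mulShift_apply] at hs
      set c₀ : Fin n → F := s • c₁ with hc₀def
      have hc₀C : c₀ ∈ C := C.smul_mem s hc₁C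
      have hdot : ∑ i, v i * c₀ i = (∑ i, v i * c₁ i) * s := by
        rw [Finset.sum_mul]
        refine Finset.sum_congr rfl fun i _ => ?_
        simp [hc₀def, Pi.smul_apply, smul_eq_mul]; ring
      have hval : ψ (∑ i, v i * c₀ i) ≠ 1 := by rw [hdot]; exact hs
      set S := ∑ c : Fin n → F, (if c ∈ C then ψ (∑ i, v i * c i) else 0) with hS
      have key : ψ (∑ i, v i * c₀ i) * S = S := by
        rw [hS, Finset.mul_sum]
        refine Fintype.sum_bijective (fun c => c₀ + c)
          (AddGroup.addLeft_bijective c₀) _ _ fun c => ?_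
        by_cases hc : c ∈ C
        · have : c₀ + c ∈ C := C.add_mem hc₀C hc
          rw [if_pos hc, if_pos this, ← AddChar.map_add_eq_mul]
          congr 1
          rw [← Finset.sum_add_distrib]
          exact Finset.sum_congr rfl fun i _ => by simp [mul_add]
        · have : c₀ + c ∉ C := fun hmem => hc (by simpa using C.sub_mem hmem hc₀C)
          rw [if_neg hc, if_neg this, mul_zero]
      exact (eq_zero_of_mul_eq_self_left hval key).symm
  -- Fourier transform of the weight enumerator: key lemma 2
  have four : ∀ c : Fin n → F,
      ∑ v : Fin n → F, ψ (∑ i, v i * c i) * (x ^ (n - wt v) * y ^ wt v)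
        = (x + ((q : ℂ) - 1) * y) ^ (n - wt c) * (x - y) ^ wt c := by
    intro c
    have coord : ∀ b : F, ∑ a : F, ψ (a * b) * (if a = 0 then x else y)
        = if b = 0 then x + ((q : ℂ) - 1) * y else x - y := by
      intro b
      have key : ∀ a : F, (if a = 0 then x else y)
          = (if a = 0 then x - y else 0) + y := by
        intro a; split_ifs <;> ring
      simp_rw [key, mul_add, Finset.sum_add_distrib, ← Finset.sum_mul,
        AddChar.sum_mulShift b hprim]
      have h1 : ∑ a : F, ψ (a * b) * (if a = 0 then x - y else 0) = x - y := by
        rw [Finset.sum_eq_single (0 : F)]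
        · simp
        · intro a _ ha; rw [if_neg ha, mul_zero]
        · intro h; exact absurd (Finset.mem_univ 0) h
      rw [h1, hq]
      split_ifs with hb
      · ring
      · ring
    calc ∑ v : Fin n → F, ψ (∑ i, v i * c i) * (x ^ (n - wt v) * y ^ wt v)
        = ∑ v : Fin n → F, ∏ i, (ψ (v i * c i) * (if v i = 0 then x else y)) := by
          refine Finset.sum_congr rfl fun v _ => ?_
          rw [Finset.prod_mul_distrib, ← addchar_map_sum, prod_ite_wt]
      _ = ∏ i, ∑ a : F, ψ (a * c i) * (if a = 0 then x else y) := by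
          rw [Finset.prod_univ_sum]
          exact (Finset.sum_congr (by rw [Fintype.piFinset_univ]) fun v _ => rfl).symm
      _ = ∏ i, (if c i = 0 then x + ((q : ℂ) - 1) * y else x - y) := by
          exact Finset.prod_congr rfl fun i _ => coord (c i)
      _ = (x + ((q : ℂ) - 1) * y) ^ (n - wt c) * (x - y) ^ wt c := prod_ite_wt c _ _
  calc ∑ v : Fin n → F,
        (if (∀ c ∈ C, ∑ i, v i * c i = 0) then x ^ (n - wt v) * y ^ wt v else 0)
          * (Nat.card C : ℂ)
      = ∑ v : Fin n → F, ∑ c : Fin n → F,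
          (if c ∈ C then ψ (∑ i, v i * c i) else 0) * (x ^ (n - wt v) * y ^ wt v) := by
        refine Finset.sum_congr rfl fun v _ => ?_
        rw [← Finset.sum_mul, ← orth v]
        split_ifs with h
        · ring
        · ring
    _ = ∑ c : Fin n → F, ∑ v : Fin n → F,
          (if c ∈ C then ψ (∑ i, v i * c i) else 0) * (x ^ (n - wt v) * y ^ wt v) :=
        Finset.sum_comm
    _ = ∑ c : Fin n → F, (if c ∈ C then
          (x + ((q : ℂ) - 1) * y) ^ (n - wt c) * (x - y) ^ wt c else 0) := by
        refine Finset.sum_congr rfl fun c _ => ?_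
        split_ifs with hc
        · simpa using four c
        · simp

end
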